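/- Let ε > 0, H ≥ 1, ζ ∈ (0, 1), and χ = 12√d·H for an integer d ≥ 1. Define L_ε as the minimal positive integer with 2^{−L_ε} ≤ 0.01·ε/H, and L_ζ as the maximal positive integer with 2^{−L_ζ} ≥ χ·L_ζ^{1.5}·ζ (assuming such an integer exists). If ε ≥ C·√d·H²·ζ·log²(1/ζ) for a sufficiently large absolute constant C, then L_ε ≤ L_ζ. -/
import Mathlib

set_option maxHeartbeats 1000000

lemma rpow_three_halves (x : ℝ) (hx : 0 ≤ x) : x ^ (1.5:ℝ) = x * Real.sqrt x := by
  rw [show (1.5:ℝ) = 1 + 1/2 by norm_num, Real.rpow_add' hx (by norm_num),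
    Real.rpow_one, ← Real.sqrt_eq_rpow]

theorem stmt17 : ∃ C : ℝ, 0 < C ∧
    ∀ (d H : ℕ), 1 ≤ d → 1 ≤ H → ∀ ζ ε : ℝ, 0 < ζ → ζ < 1 → 0 < ε →
    ∀ Lε Lζ : ℕ, 1 ≤ Lε → 1 ≤ Lζ →
    ((2 : ℝ) ^ (-(Lε : ℤ)) ≤ 0.01 * ε / H) →
    (∀ m : ℕ, 1 ≤ m → (2 : ℝ) ^ (-(m : ℤ)) ≤ 0.01 * ε / H → Lε ≤ m) →
    (12 * Real.sqrt d * H * (Lζ : ℝ) ^ (1.5 : ℝ) * ζ ≤ (2 : ℝ) ^ (-(Lζ : ℤ))) →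
    (∀ m : ℕ, 1 ≤ m → 12 * Real.sqrt d * H * (m : ℝ) ^ (1.5 : ℝ) * ζ ≤ (2 : ℝ) ^ (-(m : ℤ)) →
      m ≤ Lζ) →
    C * Real.sqrt d * H ^ 2 * ζ * (Real.logb 2 (1 / ζ)) ^ 2 ≤ ε →
    Lε ≤ Lζ := by
  refine ⟨10000, by norm_num, ?_⟩
  intro d H hd hH ζ ε hζ0 hζ1 hε0 Lε Lζ hLε1 hLζ1 hεmin hεminimal hζmax hζmaximal hC
  have hd1 : (1:ℝ) ≤ Real.sqrt d := by
    rw [show (1:ℝ) = Real.sqrt 1 by simp]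
    exact Real.sqrt_le_sqrt (by exact_mod_cast hd)
  have hH1 : (1:ℝ) ≤ H := by exact_mod_cast hH
  have hH0 : (0:ℝ) < H := by linarith
  set L := Real.logb 2 (1/ζ) with hLdef
  -- Step A: ζ ≤ 1/24
  have hLζr : (1:ℝ) ≤ (Lζ:ℝ) := by exact_mod_cast hLζ1
  have hLζpow : (1:ℝ) ≤ (Lζ : ℝ) ^ (1.5:ℝ) :=
    Real.one_le_rpow hLζr (by norm_num)
  have h2Lζ : (2:ℝ) ^ (-(Lζ:ℤ)) ≤ 1/2 := by
    rw [show (1/2 : ℝ) = (2:ℝ) ^ (-(1:ℤ)) by norm_num]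
    apply zpow_le_zpow_right₀ (by norm_num)
    omega
  have hprod : (1:ℝ) ≤ Real.sqrt d * H * (Lζ:ℝ)^(1.5:ℝ) := by
    calc (1:ℝ) = 1 * 1 * 1 := by ring
    _ ≤ Real.sqrt d * H * (Lζ:ℝ)^(1.5:ℝ) := by
        apply mul_le_mul (mul_le_mul hd1 hH1 zero_le_one (by linarith)) hLζpow zero_le_one
        positivity
  have hζ24 : ζ ≤ 1/24 := by nlinarith [hprod, hζ0]
  -- Step B: 4 ≤ L
  have hL4 : (4:ℝ) ≤ L := by
    have h16 : Real.logb 2 16 ≤ L := by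
      apply Real.logb_le_logb_of_le (by norm_num : (1:ℝ) < 2) (by norm_num)
      rw [le_div_iff₀ hζ0]
      linarith
    have h4 : Real.logb 2 16 = 4 := by
      rw [show (16:ℝ) = 2 ^ (4:ℕ) by norm_num, Real.logb_pow, Real.logb_self_eq_one] <;> norm_num
    linarith
  have hL0 : (0:ℝ) < L := by linarith
  -- ζ = 2^(-L)
  have hζeq : (2:ℝ) ^ (-L) = ζ := by
    rw [Real.rpow_neg (by norm_num), Real.rpow_logb (by norm_num) (by norm_num) (by positivity)]
    field_simp
  -- case Lε = 1
  rcases Nat.lt_or_ge Lε 2 with h | hLε2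
  · omega
  -- Step D: minimality at Lε - 1
  have hD : 0.01 * ε / H < (2:ℝ) ^ (-(Lε:ℤ) + 1) := by
    by_contra h
    push_neg at h
    have h2 : (2:ℝ) ^ (-((Lε - 1 : ℕ):ℤ)) ≤ 0.01 * ε / H := by
      rwa [show (((Lε - 1 : ℕ)):ℤ) = (Lε:ℤ) - 1 by omega, neg_sub, sub_eq_neg_add]
    have := hεminimal (Lε - 1) (by omega) h2
    omega
  have h2Lεpos : (0:ℝ) < (2:ℝ) ^ (-(Lε:ℤ)) := by positivity
  have hDsplit : (2:ℝ) ^ (-(Lε:ℤ) + 1) = 2 * (2:ℝ) ^ (-(Lε:ℤ)) := by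
    rw [zpow_add₀ (by norm_num : (2:ℝ) ≠ 0)]; ring
  -- Step E: Lε < L + 1
  have hζle : ζ ≤ 0.01 * ε / H := by
    rw [le_div_iff₀ hH0]
    have hsd : (1:ℝ) ≤ Real.sqrt d * H := by nlinarith [hd1, hH1]
    have hL16 : (16:ℝ) ≤ L^2 := by nlinarith [hL4]
    have h2 : (1:ℝ) ≤ 100 * Real.sqrt d * H * L^2 := by
      nlinarith [mul_le_mul hsd hL16 (by norm_num : (0:ℝ) ≤ 16) (by positivity : (0:ℝ) ≤ Real.sqrt d * H)]
    nlinarith [mul_le_mul_of_nonneg_left h2 (mul_pos hζ0 hH0).le, hC]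
  have hE : (Lε:ℝ) < L + 1 := by
    have h1 : (2:ℝ) ^ (-L) < (2:ℝ) ^ ((-(Lε:ℤ) + 1 : ℤ) : ℝ) := by
      rw [Real.rpow_intCast, hζeq]
      linarith
    have h2 := (Real.rpow_lt_rpow_left_iff (by norm_num : (1:ℝ) < 2)).mp h1
    push_cast at h2
    linarith
  -- key rpow bound : Lε^{1.5} ≤ 1.5 L^2
  have hLεr0 : (0:ℝ) ≤ (Lε:ℝ) := by positivity
  have hs := Real.sq_sqrt hLεr0
  have hs0 := Real.sqrt_nonneg (Lε:ℝ)
  have hsL : Real.sqrt (Lε:ℝ) ≤ L := by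
    have hLL : (Lε:ℝ) ≤ L^2 := by nlinarith [hE, hL4, sq_nonneg (L - 2)]
    have h1 : Real.sqrt (Lε:ℝ) ≤ Real.sqrt (L^2) := Real.sqrt_le_sqrt hLL
    rwa [Real.sqrt_sq (le_of_lt hL0)] at h1
  have hkey : (Lε:ℝ) ^ (1.5:ℝ) ≤ 1.5 * L^2 := by
    rw [rpow_three_halves _ hLεr0]
    nlinarith [mul_le_mul hE.le hsL hs0 (by linarith : (0:ℝ) ≤ L + 1), sq_nonneg (L - 2)]
  -- conclude via maximality for Lζ
  apply hζmaximal Lε hLε1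
  have h2P : 0.005 * ε < (2:ℝ)^(-(Lε:ℤ)) * H := by
    rw [hDsplit, div_lt_iff₀ hH0] at hD
    linarith
  calc 12 * Real.sqrt d * H * (Lε:ℝ) ^ (1.5:ℝ) * ζ
      ≤ 12 * Real.sqrt d * H * (1.5 * L^2) * ζ := by
        have hc : (0:ℝ) ≤ 12 * Real.sqrt d * H * ζ := by positivity
        nlinarith [mul_le_mul_of_nonneg_left hkey hc]
    _ ≤ 0.005 * (10000 * Real.sqrt d * H^2 * ζ * L^2) / H := by
        rw [le_div_iff₀ hH0]
        have nn : (0:ℝ) ≤ Real.sqrt d * H^2 * ζ * L^2 := by positivity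
        nlinarith [nn]
    _ ≤ 0.005 * ε / H := by gcongr
    _ ≤ (2:ℝ) ^ (-(Lε:ℤ)) := by rw [div_le_iff₀ hH0]; linarith
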